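/- Let d ≥ 0 and let σ be a partition of d with an even number 2k+2 (k ≥ 0) of even parts after padding with zeros to length N := 2g-2-d ≥ ℓ(σ), where either ℓ(σ) < N, or ℓ(σ) = N and σ has at least two even parts. Then there exists a tree on N vertices, each of degree at most 3, in which exactly 2k+2 vertices have odd degree, together with a bijection assigning the padded parts τ_i to vertices so that even parts go to odd-degree vertices; consequently the genus values g_i = (τ_i + 3 - n_i)/2 are nonnegative integers making the tree a stable tree of total genus g with housing partition σ. -/

import Mathlib

open Finset

open scoped Classical in
/-- The housing partition of a stable tree: the multiset of the positive values
`2g(v) - 3 + n(v)` over the vertices `v`, where `n(v)` is the degree of `v`. -/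
noncomputable def housingData {N : ℕ} (G : SimpleGraph (Fin N)) (gv : Fin N → ℕ) :
    Multiset ℕ :=
  ((Finset.univ : Finset (Fin N)).val.map (fun v => 2 * gv v + G.degree v - 3)).filter
    (fun x => 0 < x)

section HousingAux

open SimpleGraph
open scoped Classical

theorem acyclic_parent {n : ℕ} (G : SimpleGraph (Fin n)) (f : ℕ → ℕ)
    (h : ∀ a b : Fin n, G.Adj a b →
      (f a.val = b.val ∧ b.val < a.val) ∨ (f b.val = a.val ∧ a.val < b.val)) :
    G.IsAcyclic := by
  intro v c hc
  have hne : c.support.toFinset.Nonempty :=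
    ⟨v, by simp [SimpleGraph.Walk.start_mem_support]⟩
  set u := c.support.toFinset.max' hne with hu
  have humem : u ∈ c.support := by
    have := c.support.toFinset.max'_mem hne; simpa using this
  have hmax : ∀ y : Fin n, y ∈ c.support → y ≤ u := fun y hy =>
    c.support.toFinset.le_max' y (by simpa using hy)
  set c₂ := c.rotate u humem with hc₂def
  have hc₂ : c₂.IsCycle := hc.rotate humem
  have hmax₂ : ∀ y : Fin n, y ∈ c₂.support → y ≤ u := by
    intro y hy
    rw [SimpleGraph.Walk.support_eq_cons] at hy
    rcases List.mem_cons.mp hy with rfl | hy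
    · exact le_refl _
    · apply hmax
      have hrot := SimpleGraph.Walk.support_rotate c u humem
      have : y ∈ c.support.tail := (hrot.mem_iff).mp hy
      rw [SimpleGraph.Walk.support_eq_cons c]
      exact List.mem_cons_of_mem _ this
  clear_value c₂ u
  clear hc₂def hu hc humem hne
  cases c₂ with
  | nil => exact hc₂.ne_nil rfl
  | cons hadj p =>
    rename_i w
    rw [SimpleGraph.Walk.cons_isCycle_iff] at hc₂
    obtain ⟨hp, hedge⟩ := hc₂
    have hwu : w ≠ u := (G.ne_of_adj hadj).symm
    have hwmem : w ∈ (SimpleGraph.Walk.cons hadj p).support := by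
      simp [SimpleGraph.Walk.support_cons, SimpleGraph.Walk.start_mem_support]
    have hwlt : w < u := lt_of_le_of_ne (hmax₂ w hwmem) hwu
    have hwf : f u.val = w.val := by
      rcases h u w hadj with ⟨h1, h2⟩ | ⟨h1, h2⟩
      · exact h1
      · exact absurd h2 (by exact Nat.not_lt.mpr (le_of_lt hwlt))
    obtain ⟨x, hx, q, hq⟩ := SimpleGraph.Walk.exists_eq_cons_of_ne hwu.symm p.reverse
    have hxmem : x ∈ (SimpleGraph.Walk.cons hadj p).support := by
      have : x ∈ p.reverse.support := by
        rw [hq]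
        simp [SimpleGraph.Walk.support_cons]
      rw [SimpleGraph.Walk.support_reverse, List.mem_reverse] at this
      simp [SimpleGraph.Walk.support_cons]
      exact Or.inr this
    have hxu : x ≠ u := fun hh => G.loopless.irrefl u (hh ▸ hx)
    have hxlt : x < u := lt_of_le_of_ne (hmax₂ x hxmem) hxu
    have hxf : f u.val = x.val := by
      rcases h u x hx with ⟨h1, h2⟩ | ⟨h1, h2⟩
      · exact h1
      · exact absurd h2 (by exact Nat.not_lt.mpr (le_of_lt hxlt))
    have hxw : x = w := by
      apply Fin.ext; rw [← hwf, ← hxf]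
    subst hxw
    apply hedge
    have : s(u, x) ∈ p.reverse.edges := by
      rw [hq]; simp [SimpleGraph.Walk.edges_cons]
    rw [SimpleGraph.Walk.edges_reverse, List.mem_reverse] at this
    exact this

/-- parent function of the caterpillar -/
def par (k b x : ℕ) : ℕ := if x < k+2+b then x - 1 else x - (k+1+b)

def cat (k b : ℕ) : SimpleGraph (Fin (2*k+2+b)) where
  Adj v w := (par k b v.val = w.val ∧ w.val < v.val) ∨ (par k b w.val = v.val ∧ v.val < w.val)
  symm := by constructor; intro v w hw; tauto
  loopless := by
    constructor; intro v hv
    rcases hv with ⟨_, h⟩ | ⟨_, h⟩ <;> exact absurd h (lt_irrefl _)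

lemma cat_adj (k b : ℕ) (v w : Fin (2*k+2+b)) :
    (cat k b).Adj v w ↔
      (par k b v.val = w.val ∧ w.val < v.val) ∨ (par k b w.val = v.val ∧ v.val < w.val) :=
  Iff.rfl

lemma card_filter_fin (n : ℕ) (Q : ℕ → Prop) :
    ((univ : Finset (Fin n)).filter (fun v => Q v.val)).card
      = ((Finset.range n).filter Q).card := by
  have h1 : (Finset.range n) = (univ : Finset (Fin n)).map Fin.valEmbedding := by
    rw [Fin.map_valEmbedding_univ]; ext x; simp
  rw [h1, Finset.filter_map, Finset.card_map]
  congr 1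

lemma cat_degree (k b : ℕ) (v : Fin (2*k+2+b)) :
    (cat k b).degree v =
      if v.val = 0 then 1 else if v.val ≤ k then 3 else if v.val ≤ k+b then 2 else 1 := by
  have hv := v.isLt
  have hdeg : (cat k b).degree v = ((cat k b).neighborFinset v).card := rfl
  rcases Nat.eq_zero_or_pos v.val with h0 | h0
  · rw [if_pos h0]
    have hn : (cat k b).neighborFinset v = {⟨1, by omega⟩} := by
      ext w
      rw [SimpleGraph.mem_neighborFinset]
      simp only [cat_adj, Finset.mem_singleton, Fin.ext_iff, par]
      split_ifs <;> omega
    rw [hdeg, hn, Finset.card_singleton]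
  · rw [if_neg (by omega)]
    by_cases h1 : v.val ≤ k
    · rw [if_pos h1]
      have hn : (cat k b).neighborFinset v =
          {⟨v.val - 1, by omega⟩, ⟨v.val + 1, by omega⟩, ⟨k+1+b+v.val, by omega⟩} := by
        ext w
        rw [SimpleGraph.mem_neighborFinset]
        simp only [cat_adj, Finset.mem_insert, Finset.mem_singleton, Fin.ext_iff, par]
        split_ifs <;> omega
      rw [hdeg, hn]
      rw [Finset.card_insert_of_notMem
          (by simp only [Finset.mem_insert, Finset.mem_singleton, Fin.ext_iff]; omega),
        Finset.card_insert_of_notMem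
          (by simp only [Finset.mem_singleton, Fin.ext_iff]; omega),
        Finset.card_singleton]
    · rw [if_neg h1]
      by_cases h2 : v.val ≤ k + b
      · rw [if_pos h2]
        have hn : (cat k b).neighborFinset v =
            {⟨v.val - 1, by omega⟩, ⟨v.val + 1, by omega⟩} := by
          ext w
          rw [SimpleGraph.mem_neighborFinset]
          simp only [cat_adj, Finset.mem_insert, Finset.mem_singleton, Fin.ext_iff, par]
          split_ifs <;> omega
        rw [hdeg, hn]
        rw [Finset.card_insert_of_notMem
            (by simp only [Finset.mem_singleton, Fin.ext_iff]; omega),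
          Finset.card_singleton]
      · rw [if_neg h2]
        have hplt : par k b v.val < v.val := by unfold par; split_ifs <;> omega
        have hn : (cat k b).neighborFinset v = {⟨par k b v.val, by omega⟩} := by
          ext w
          rw [SimpleGraph.mem_neighborFinset]
          simp only [cat_adj, Finset.mem_singleton, Fin.ext_iff, par]
          split_ifs <;> omega
        rw [hdeg, hn, Finset.card_singleton]

lemma cat_connected (k b : ℕ) : (cat k b).Connected := by
  have hzero : (0 : ℕ) < 2*k+2+b := by omega
  rw [SimpleGraph.connected_iff]
  refine ⟨?_, ⟨⟨0, hzero⟩⟩⟩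
  have key : ∀ n : ℕ, ∀ v : Fin (2*k+2+b), v.val = n → (cat k b).Reachable v ⟨0, hzero⟩ := by
    intro n
    induction n using Nat.strong_induction_on with
    | _ n ih =>
      intro v hvn
      rcases Nat.eq_zero_or_pos v.val with h0 | h0
      · have : v = ⟨0, hzero⟩ := Fin.ext h0
        rw [this]
      · have hplt : par k b v.val < v.val := by unfold par; split_ifs <;> omega
        have hpv : par k b v.val < 2*k+2+b := lt_trans hplt v.isLt
        have hadj : (cat k b).Adj v ⟨par k b v.val, hpv⟩ := Or.inl ⟨rfl, hplt⟩
        exact hadj.reachable.trans (ih (par k b v.val) (hvn ▸ hplt) _ rfl)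
  intro v w
  exact (key v.val v rfl).trans (key w.val w rfl).symm

lemma map_univ_getD {n : ℕ} (L : List ℕ) (hL : L.length = n) :
    ((univ : Finset (Fin n)).val.map (fun v : Fin n => L.getD v.val 0)) = (L : Multiset ℕ) := by
  rw [Fin.univ_def]
  show (Multiset.map (fun v : Fin n => L.getD v.val 0) ↑(List.finRange n)) = (L : Multiset ℕ)
  rw [Multiset.map_coe]
  congr 1
  apply List.ext_getElem
  · simp [hL]
  · intro i h1 h2
    simp only [List.getElem_map, List.getElem_finRange]
    rw [List.getD_eq_getElem _ _ (by omega)]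
    simp

lemma multiset_sum_parity (s : Multiset ℕ) :
    s.sum % 2 = (s.filter (fun x => ¬ Even x)).card % 2 := by
  induction s using Multiset.induction_on with
  | empty => simp
  | cons a s ih =>
    rw [Multiset.sum_cons, Multiset.filter_cons]
    by_cases ha : Even a
    · rw [if_neg (by simpa using ha), zero_add]
      have h2 := Nat.even_iff.mp ha
      omega
    · rw [if_pos (by simpa using ha), Multiset.card_add, Multiset.card_singleton]
      have h2 := Nat.odd_iff.mp (Nat.not_even_iff_odd.mp ha)
      omega

theorem housing_aux (k b g d : ℕ) (σ : Multiset ℕ)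
    (hpos : ∀ x ∈ σ, 0 < x) (hsum : σ.sum = d)
    (hb : (σ.filter (fun x => ¬ Even x)).card = b)
    (hcard : σ.card ≤ 2*k+2+b)
    (he : (σ.filter (fun x => Even x)).card + (2*k+2+b - σ.card) = 2*k+2)
    (hdg : d + (2*k+2+b) + 2 = 2*g) :
    ∃ (G : SimpleGraph (Fin (2*k+2+b))) (gv : Fin (2*k+2+b) → ℕ),
      G.IsTree ∧ (∀ v, G.degree v ≤ 3) ∧
      ((Finset.univ : Finset (Fin (2*k+2+b))).filter
          (fun v => Odd (G.degree v))).card =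
        (σ.filter (fun x => Even x)).card + (2*k+2+b - σ.card) ∧
      (∑ v, gv v) = g ∧ (∀ v, 2 < 2 * gv v + G.degree v) ∧
      (∀ v, Even (2 * gv v + G.degree v - 3) ∧ 0 < 2 * gv v + G.degree v - 3 →
        Odd (G.degree v)) ∧
      housingData G gv = σ := by
  have hecard : (σ.filter (fun x => Even x)).card + (σ.filter (fun x => ¬ Even x)).card
      = σ.card := by
    rw [← Multiset.card_add, Multiset.filter_add_not]
  set EL : List ℕ := (σ.filter (fun x => Even x)).toList
      ++ List.replicate (2*k+2+b - σ.card) 0 with hELdef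
  set OL : List ℕ := (σ.filter (fun x => ¬ Even x)).toList with hOLdef
  have hELlen : EL.length = 2*k+2 := by
    rw [hELdef, List.length_append, Multiset.length_toList, List.length_replicate]; exact he
  have hOLlen : OL.length = b := by rw [hOLdef, Multiset.length_toList]; exact hb
  have hELeven : ∀ x ∈ EL, Even x := by
    intro x hx
    rcases List.mem_append.mp hx with hh | hh
    · exact (Multiset.mem_filter.mp (Multiset.mem_toList.mp hh)).2
    · rw [List.eq_of_mem_replicate hh]; exact Even.zero
  have hOLodd : ∀ x ∈ OL, ¬ Even x := fun x hx =>
    (Multiset.mem_filter.mp (Multiset.mem_toList.mp hx)).2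
  set A := EL.take (k+1) with hAdef
  set C := EL.drop (k+1) with hCdef
  have hAlen : A.length = k+1 := by rw [hAdef, List.length_take, hELlen]; omega
  have hClen : C.length = k+1 := by rw [hCdef, List.length_drop, hELlen]; omega
  set L := A ++ (OL ++ C) with hLdef
  have hLlen : L.length = 2*k+2+b := by
    rw [hLdef]; simp only [List.length_append]; omega
  set τ : Fin (2*k+2+b) → ℕ := fun v => L.getD v.val 0 with hτdef
  have hτe : ∀ v : Fin (2*k+2+b), v.val ≤ k ∨ k+b+1 ≤ v.val → Even (τ v) := by
    intro v hv
    rcases hv with hv | hv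
    · have h1 : v.val < A.length := by omega
      have e1 : τ v = A.getD v.val 0 := List.getD_append _ _ _ _ h1
      rw [e1, List.getD_eq_getElem _ _ (by omega)]
      exact hELeven _ (List.take_subset _ _ (List.getElem_mem _))
    · have hvlt := v.isLt
      have h1 : A.length ≤ v.val := by omega
      have e2 : τ v = (OL ++ C).getD (v.val - A.length) 0 :=
        List.getD_append_right _ _ _ _ h1
      have h2 : OL.length ≤ v.val - A.length := by omega
      rw [e2, List.getD_append_right _ _ _ _ h2, List.getD_eq_getElem _ _ (by omega)]
      exact hELeven _ (List.drop_subset _ _ (List.getElem_mem _))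
  have hτo : ∀ v : Fin (2*k+2+b), k+1 ≤ v.val → v.val ≤ k+b → ¬ Even (τ v) := by
    intro v hv1 hv2
    have h1 : A.length ≤ v.val := by omega
    have e2 : τ v = (OL ++ C).getD (v.val - A.length) 0 :=
      List.getD_append_right _ _ _ _ h1
    have h2 : v.val - A.length < OL.length := by omega
    rw [e2, List.getD_append _ _ _ _ h2, List.getD_eq_getElem _ _ h2]
    exact hOLodd _ (List.getElem_mem _)
  have hfan := Multiset.filter_add_not (fun x => Even x) σ
  have hMS : (L : Multiset ℕ) = σ + Multiset.replicate (2*k+2+b - σ.card) 0 := by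
    have hAC : (A : Multiset ℕ) + (C : Multiset ℕ) = (EL : Multiset ℕ) := by
      rw [Multiset.coe_add, hAdef, hCdef, List.take_append_drop]
    calc (L : Multiset ℕ) = (A : Multiset ℕ) + ((OL : Multiset ℕ) + (C : Multiset ℕ)) := by
          rw [hLdef, Multiset.coe_add, Multiset.coe_add]
      _ = ((A : Multiset ℕ) + (C : Multiset ℕ)) + (OL : Multiset ℕ) := by
          rw [add_comm (OL : Multiset ℕ) (C : Multiset ℕ), ← add_assoc]
      _ = (EL : Multiset ℕ) + (OL : Multiset ℕ) := by rw [hAC]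
      _ = σ + Multiset.replicate (2*k+2+b - σ.card) 0 := by
          rw [hELdef, hOLdef, ← Multiset.coe_add, Multiset.coe_toList,
            Multiset.coe_replicate, Multiset.coe_toList, add_right_comm, hfan]
  have hτmap : ((univ : Finset (Fin (2*k+2+b))).val.map τ) = (L : Multiset ℕ) :=
    map_univ_getD L hLlen
  set gv : Fin (2*k+2+b) → ℕ := fun v => (τ v + 3 - (cat k b).degree v) / 2 with hgvdef
  have key : ∀ v, 2 * gv v + (cat k b).degree v = τ v + 3 ∧
      (τ v % 2 = 0 ↔ (cat k b).degree v % 2 = 1) := by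
    intro v
    have hd := cat_degree k b v
    have hvlt := v.isLt
    have hcases : (((cat k b).degree v = 1 ∨ (cat k b).degree v = 3) ∧ τ v % 2 = 0)
        ∨ ((cat k b).degree v = 2 ∧ τ v % 2 = 1) := by
      by_cases hreg : k+1 ≤ v.val ∧ v.val ≤ k+b
      · refine Or.inr ⟨?_, ?_⟩
        · rw [hd, if_neg (by omega), if_neg (by omega), if_pos (by omega)]
        · have := hτo v hreg.1 hreg.2
          rw [Nat.even_iff] at this; omega
      · have hor : v.val ≤ k ∨ k+b+1 ≤ v.val := by omega
        refine Or.inl ⟨?_, ?_⟩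
        · rw [hd]; split_ifs <;> omega
        · have := hτe v hor; rw [Nat.even_iff] at this; omega
    constructor
    · show 2 * ((τ v + 3 - (cat k b).degree v) / 2) + (cat k b).degree v = τ v + 3
      rcases hcases with ⟨h1 | h1, h2⟩ | ⟨h1, h2⟩ <;> omega
    · rcases hcases with ⟨h1 | h1, h2⟩ | ⟨h1, h2⟩ <;> omega
  have htree : (cat k b).IsTree :=
    ⟨cat_connected k b, acyclic_parent _ (par k b) (fun a b' hab => hab)⟩
  have hdegsum : ∑ v, (cat k b).degree v = 2*(2*k+2+b) - 2 := by
    have e1 := SimpleGraph.sum_degrees_eq_twice_card_edges (cat k b)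
    have e2 := htree.card_edgeFinset
    simp only [SimpleGraph.edgeFinset, Set.toFinset_card, Fintype.card_eq_nat_card] at e1 e2
    have e3 : Nat.card (Fin (2*k+2+b)) = 2*k+2+b := by simp
    omega
  have hτsum : ∑ v, τ v = d := by
    have h1 : ∑ v, τ v = ((univ : Finset (Fin (2*k+2+b))).val.map τ).sum := rfl
    rw [h1, hτmap, hMS, Multiset.sum_add, hsum, Multiset.sum_replicate, smul_zero, add_zero]
  have hgvsum : ∑ v, gv v = g := by
    have h1 : ∑ v, (2 * gv v + (cat k b).degree v) = ∑ v, (τ v + 3) :=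
      Finset.sum_congr rfl (fun v _ => (key v).1)
    rw [Finset.sum_add_distrib, ← Finset.mul_sum, Finset.sum_add_distrib, Finset.sum_const,
      Finset.card_univ, Fintype.card_fin, smul_eq_mul, hτsum, hdegsum] at h1
    omega
  have hoddcount : ((univ : Finset (Fin (2*k+2+b))).filter
      (fun v => Odd ((cat k b).degree v))).card
      = (σ.filter (fun x => Even x)).card + (2*k+2+b - σ.card) := by
    have hcongr : (univ : Finset (Fin (2*k+2+b))).filter (fun v => Odd ((cat k b).degree v))
        = (univ : Finset (Fin (2*k+2+b))).filter
            (fun v => ¬(k+1 ≤ v.val ∧ v.val ≤ k+b)) := by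
      apply Finset.filter_congr
      intro v _
      have hd := cat_degree k b v
      rw [Nat.odd_iff]
      constructor
      · intro hh
        split_ifs at hd <;> omega
      · intro hh
        split_ifs at hd <;> omega
    have h2 : ((univ : Finset (Fin (2*k+2+b))).filter
        (fun v => ¬(k+1 ≤ v.val ∧ v.val ≤ k+b))).card
        = ((Finset.range (2*k+2+b)).filter (fun x => ¬(k+1 ≤ x ∧ x ≤ k+b))).card := by
      have h3 := card_filter_fin (2*k+2+b) (fun x => ¬(k+1 ≤ x ∧ x ≤ k+b))
      convert h3 using 2 <;>
        exact (Finset.filter_congr_decidable _ _ _).symm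
    rw [hcongr, h2]
    have hset : (Finset.range (2*k+2+b)).filter (fun x => ¬(k+1 ≤ x ∧ x ≤ k+b))
        = Finset.range (k+1) ∪ Finset.Ico (k+b+1) (2*k+2+b) := by
      ext x
      simp only [Finset.mem_filter, Finset.mem_range, Finset.mem_union, Finset.mem_Ico]
      omega
    have hdisj : Disjoint (Finset.range (k+1)) (Finset.Ico (k+b+1) (2*k+2+b)) := by
      rw [Finset.disjoint_left]
      intro x hx1 hx2
      rw [Finset.mem_range] at hx1
      rw [Finset.mem_Ico] at hx2
      omega
    rw [hset, Finset.card_union_of_disjoint hdisj, Finset.card_range, Nat.card_Ico]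
    omega
  have hhouse : housingData (cat k b) gv = σ := by
    have hmapeq : ((univ : Finset (Fin (2*k+2+b))).val.map
        (fun v => 2 * gv v + (cat k b).degree v - 3))
        = ((univ : Finset (Fin (2*k+2+b))).val.map τ) :=
      Multiset.map_congr rfl (fun v _ => by have := (key v).1; omega)
    show (((univ : Finset (Fin (2*k+2+b))).val.map
        (fun v => 2 * gv v + (cat k b).degree v - 3)).filter (fun x => 0 < x)) = σ
    rw [hmapeq, hτmap, hMS, Multiset.filter_add]
    have h1 : (σ.filter (fun x => 0 < x)) = σ := Multiset.filter_eq_self.mpr hpos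
    have h2 : ((Multiset.replicate (2*k+2+b - σ.card) 0).filter (fun x : ℕ => 0 < x)) = 0 := by
      rw [Multiset.filter_eq_nil]
      intro x hx
      rw [Multiset.eq_of_mem_replicate hx]
      exact lt_irrefl 0
    rw [h1, h2, add_zero]
  refine ⟨cat k b, gv, htree, ?_, hoddcount, hgvsum, ?_, ?_, hhouse⟩
  · intro v
    have hd := cat_degree k b v
    split_ifs at hd <;> omega
  · intro v
    have h1 := (key v).1
    omega
  · intro v hv
    obtain ⟨hev', hpos'⟩ := hv
    have h1 := (key v).1
    have h2 := (key v).2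
    rw [Nat.even_iff] at hev'
    rw [Nat.odd_iff]
    omega

end HousingAux

open scoped Classical in
/-- if `σ` is a partition of `d` which, padded with zeros to length
`N = 2g-2-d`, has an (even) number of even entries, and either `ℓ(σ) < N` or
`ℓ(σ) = N` with at least two even parts, then there is a stable tree of total genus
`g` on `N` vertices, all of degree at most `3`, whose number of odd-degree vertices
equals the number of even padded parts of `σ`, whose genus values are nonnegative
integers, and whose housing partition is `σ`. -/
theorem existence_of_housing_tree (g d : ℕ) (hg : 2 ≤ g)
    (σ : Multiset ℕ) (hpos : ∀ x ∈ σ, 0 < x) (hsum : σ.sum = d)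
    (h : σ.card < 2 * g - 2 - d ∨
      (σ.card = 2 * g - 2 - d ∧ 2 ≤ (σ.filter (fun x => Even x)).card)) :
    ∃ (G : SimpleGraph (Fin (2 * g - 2 - d))) (gv : Fin (2 * g - 2 - d) → ℕ),
      G.IsTree ∧ (∀ v, G.degree v ≤ 3) ∧
      ((Finset.univ : Finset (Fin (2 * g - 2 - d))).filter
          (fun v => Odd (G.degree v))).card =
        (σ.filter (fun x => Even x)).card + (2 * g - 2 - d - σ.card) ∧
      (∑ v, gv v) = g ∧ (∀ v, 2 < 2 * gv v + G.degree v) ∧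
      (∀ v, Even (2 * gv v + G.degree v - 3) ∧ 0 < 2 * gv v + G.degree v - 3 →
        Odd (G.degree v)) ∧
      housingData G gv = σ := by
  have hfle : (σ.filter (fun x => Even x)).card ≤ σ.card :=
    Multiset.card_le_card (Multiset.filter_le _ _)
  have hN : 1 ≤ 2 * g - 2 - d := by
    rcases h with h | ⟨h1, h2⟩
    · omega
    · by_contra hcon
      omega
  have hcard : σ.card ≤ 2 * g - 2 - d := by
    rcases h with h | ⟨h1, h2⟩ <;> omega
  have heo : (σ.filter (fun x => Even x)).card + (σ.filter (fun x => ¬ Even x)).card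
      = σ.card := by
    rw [← Multiset.card_add, Multiset.filter_add_not]
  have hpar : d % 2 = (σ.filter (fun x => ¬ Even x)).card % 2 :=
    hsum ▸ multiset_sum_parity σ
  have hm0 : ¬ ((σ.filter (fun x => Even x)).card = 0 ∧ (2*g-2-d) - σ.card = 0) := by
    rintro ⟨he0, hp0⟩
    rcases h with h | ⟨h1, h2⟩ <;> omega
  have hkb : ∃ k bb,
      (σ.filter (fun x => Even x)).card + ((2*g-2-d) - σ.card) = 2*k+2 ∧
      (σ.filter (fun x => ¬ Even x)).card = bb ∧
      2*g-2-d = 2*k+2+bb := by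
    refine ⟨((σ.filter (fun x => Even x)).card + ((2*g-2-d) - σ.card))/2 - 1,
      (σ.filter (fun x => ¬ Even x)).card, ?_, rfl, ?_⟩ <;> omega
  obtain ⟨k, bb, hk1, hk2, hk3⟩ := hkb
  rw [hk3]
  exact housing_aux k bb g d σ hpos hsum hk2 (by omega) (by omega) (by omega)
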